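/- Let 0 < γ < 1 and let μ be a finite signed Borel measure on [0,1] with μ([0,1]) = 0. Define I(μ) = ∫∫_{[0,1]²} |x−y|^γ dμ(x) dμ(y). Then I(μ) ≤ 0, and I(μ) = 0 if and only if μ(E) = 0 for every Borel set E ⊆ [0,1]. -/

import Mathlib

set_option maxHeartbeats 1000000

open MeasureTheory Set Real
open scoped NNReal ENNReal


lemma master_meas {β : ℝ} : Measurable (fun s : ℝ => (1 - Real.exp (-s)) * s ^ (-1 - β)) := by
  fun_prop

lemma master_int {β : ℝ} (hβ : 0 < β) (hβ1 : β < 1) :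
    IntegrableOn (fun s => (1 - Real.exp (-s)) * s ^ (-1 - β)) (Ioi (0:ℝ)) := by
  have h1 : IntegrableOn (fun s => (1 - Real.exp (-s)) * s ^ (-1 - β)) (Ioc (0:ℝ) 1) := by
    have hb : IntegrableOn (fun s : ℝ => s ^ (-β)) (Ioc (0:ℝ) 1) := by
      rw [← intervalIntegrable_iff_integrableOn_Ioc_of_le zero_le_one]
      exact intervalIntegral.intervalIntegrable_rpow' (by linarith)
    refine Integrable.mono' hb master_meas.aestronglyMeasurable ?_
    filter_upwards [ae_restrict_mem measurableSet_Ioc] with s hs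
    have hs0 : 0 < s := hs.1
    have h1 : 0 ≤ 1 - Real.exp (-s) := by
      have := Real.exp_le_one_iff.2 (by linarith : -s ≤ 0); linarith
    have h2 : 1 - Real.exp (-s) ≤ s := by
      have := Real.add_one_le_exp (-s); linarith
    rw [Real.norm_eq_abs, abs_mul, abs_of_nonneg h1,
      abs_of_nonneg (Real.rpow_nonneg hs0.le _)]
    calc (1 - Real.exp (-s)) * s ^ (-1 - β) ≤ s * s ^ (-1 - β) := by
          exact mul_le_mul_of_nonneg_right h2 (Real.rpow_nonneg hs0.le _)
      _ = s ^ (-β) := by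
          rw [← Real.rpow_one_add' hs0.le (by linarith)]; ring_nf
  have h2 : IntegrableOn (fun s => (1 - Real.exp (-s)) * s ^ (-1 - β)) (Ioi (1:ℝ)) := by
    have hb : IntegrableOn (fun s : ℝ => s ^ (-1-β)) (Ioi (1:ℝ)) :=
      integrableOn_Ioi_rpow_of_lt (by linarith) one_pos
    refine Integrable.mono' hb master_meas.aestronglyMeasurable ?_
    filter_upwards [ae_restrict_mem measurableSet_Ioi] with s hs
    have hs0 : (0:ℝ) < s := lt_trans one_pos hs
    have h1 : 0 ≤ 1 - Real.exp (-s) := by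
      have := Real.exp_le_one_iff.2 (by linarith : -s ≤ 0); linarith
    have h2' : 1 - Real.exp (-s) ≤ 1 := by have := Real.exp_pos (-s); linarith
    rw [Real.norm_eq_abs, abs_mul, abs_of_nonneg h1,
      abs_of_nonneg (Real.rpow_nonneg hs0.le _)]
    nth_rewrite 2 [← one_mul (s ^ (-1-β))]
    exact mul_le_mul_of_nonneg_right h2' (Real.rpow_nonneg hs0.le _)
  have := h1.union h2
  rwa [Ioc_union_Ioi_eq_Ioi zero_le_one] at this

noncomputable def Kc (β : ℝ) : ℝ := ∫ s in Ioi (0:ℝ), (1 - Real.exp (-s)) * s ^ (-1 - β)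

lemma Kc_pos {β : ℝ} (hβ : 0 < β) (hβ1 : β < 1) : 0 < Kc β := by
  rw [Kc]
  have hne : ∀ s ∈ Ioi (0:ℝ), 0 < (1 - Real.exp (-s)) * s ^ (-1 - β) := by
    intro s hs
    have h1 : 0 < 1 - Real.exp (-s) := by
      have := Real.exp_lt_one_iff.2 (by linarith [mem_Ioi.1 hs] : -s < 0); linarith
    exact mul_pos h1 (Real.rpow_pos_of_pos (mem_Ioi.1 hs) _)
  rw [setIntegral_pos_iff_support_of_nonneg_ae ?pos ((master_int hβ hβ1))]
  case pos =>
    filter_upwards [ae_restrict_mem measurableSet_Ioi] with s hs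
    exact (hne s hs).le
  · have : Ioi (0:ℝ) ⊆ Function.support fun s => (1 - Real.exp (-s)) * s ^ (-1 - β) :=
      fun s hs => (hne s hs).ne'
    refine lt_of_lt_of_le ?_ (measure_mono (subset_inter this subset_rfl))
    rw [Real.volume_Ioi]
    exact ENNReal.zero_lt_top

lemma scaled_congr {β r : ℝ} (hr : 0 < r) :
    ∀ s ∈ Ioi (0:ℝ), (1 - Real.exp (-(r * s))) * s ^ (-1 - β)
      = ((1 - Real.exp (-(r * s))) * (r * s) ^ (-1 - β)) * r ^ (1 + β) := by
  intro s hs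
  have hs0 : (0:ℝ) < s := hs
  rw [Real.mul_rpow hr.le hs0.le]
  have : r ^ (-1-β) * r ^ (1+β) = 1 := by
    rw [← Real.rpow_add hr]; norm_num
  symm
  calc ((1 - Real.exp (-(r * s))) * (r ^ (-1 - β) * s ^ (-1 - β))) * r ^ (1 + β)
      = (1 - Real.exp (-(r * s))) * s ^ (-1 - β) * (r ^ (-1-β) * r ^ (1+β)) := by ring
    _ = (1 - Real.exp (-(r * s))) * s ^ (-1 - β) := by rw [this, mul_one]

lemma scaled_int {β : ℝ} (hβ : 0 < β) (hβ1 : β < 1) {r : ℝ} (hr : 0 ≤ r) :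
    IntegrableOn (fun s => (1 - Real.exp (-(r * s))) * s ^ (-1 - β)) (Ioi (0:ℝ)) := by
  rcases eq_or_lt_of_le hr with h0 | hrpos
  · have : (fun s : ℝ => (1 - Real.exp (-(r * s))) * s ^ (-1 - β)) = fun _ => 0 := by
      funext s; rw [← h0]; simp
    rw [this]; exact integrable_zero _ _ _
  · have base : IntegrableOn (fun s => ((1 - Real.exp (-s)) * s ^ (-1 - β)) * r ^ (1+β)) (Ioi (0:ℝ)) :=
      (master_int hβ hβ1).mul_const _
    have : IntegrableOn (fun s => ((1 - Real.exp (-(r*s))) * (r*s) ^ (-1 - β)) * r ^ (1+β)) (Ioi (0:ℝ)) := by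
      have := (integrableOn_Ioi_comp_mul_left_iff
        (fun s => ((1 - Real.exp (-s)) * s ^ (-1 - β)) * r ^ (1+β)) 0 hrpos).2 (by rwa [mul_zero])
      simpa using this
    refine this.congr_fun ?_ measurableSet_Ioi
    intro s hs
    exact (scaled_congr hrpos s hs).symm

lemma scaled_val {β : ℝ} (hβ : 0 < β) (hβ1 : β < 1) {r : ℝ} (hr : 0 ≤ r) :
    ∫ s in Ioi (0:ℝ), (1 - Real.exp (-(r * s))) * s ^ (-1 - β) = r ^ β * Kc β := by
  rcases eq_or_lt_of_le hr with h0 | hrpos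
  · rw [← h0]; simp [Real.zero_rpow hβ.ne']
  · rw [setIntegral_congr_fun measurableSet_Ioi (scaled_congr hrpos)]
    have : ∫ s in Ioi (0:ℝ), ((1 - Real.exp (-(r*s))) * (r*s) ^ (-1 - β)) * r ^ (1+β)
        = r⁻¹ • ∫ s in Ioi (r * 0), ((1 - Real.exp (-s)) * s ^ (-1 - β)) * r ^ (1+β) :=
      integral_comp_mul_left_Ioi (fun s => ((1 - Real.exp (-s)) * s ^ (-1 - β)) * r ^ (1+β)) 0 hrpos
    rw [this, mul_zero, integral_mul_const, smul_eq_mul, ← Kc]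
    rw [show r⁻¹ = r ^ (-1:ℝ) by rw [Real.rpow_neg_one]]
    rw [← mul_assoc, mul_comm (r ^ (-1:ℝ)), mul_assoc, ← Real.rpow_add hrpos]
    ring_nf

noncomputable def Gfun (a b : Measure ℝ) (s : ℝ) : ℝ :=
  ∫ z : ℝ × ℝ, Real.exp (-((z.1 - z.2)^2 * s)) ∂(a.prod b)
noncomputable def mss (a : Measure ℝ) : ℝ := (a univ).toReal

lemma sq_rpow_abs {γ : ℝ} (u : ℝ) : (u^2) ^ (γ/2) = |u| ^ γ := by
  rw [← sq_abs u, ← Real.rpow_natCast |u| 2, ← Real.rpow_mul (abs_nonneg u)]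
  congr 1; ring

lemma ae_mem_Icc {μ : Measure ℝ} (hs : μ (Icc (0:ℝ) 1)ᶜ = 0) : ∀ᵐ x ∂μ, x ∈ Icc (0:ℝ) 1 := by
  rw [ae_iff]; convert hs using 2; rfl

lemma ae_mem_Icc_prod {a b : Measure ℝ} [SFinite a] [SFinite b] [IsFiniteMeasure a]
    [IsFiniteMeasure b] (ha : a (Icc (0:ℝ) 1)ᶜ = 0) (hb : b (Icc (0:ℝ) 1)ᶜ = 0) :
    ∀ᵐ z : ℝ × ℝ ∂(a.prod b), z.1 ∈ Icc (0:ℝ) 1 ∧ z.2 ∈ Icc (0:ℝ) 1 := by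
  have h1 : ∀ᵐ z : ℝ × ℝ ∂(a.prod b), z.1 ∈ Icc (0:ℝ) 1 := by
    rw [ae_iff]
    have : {z : ℝ × ℝ | ¬ z.1 ∈ Icc (0:ℝ) 1} = (Icc (0:ℝ) 1)ᶜ ×ˢ (univ : Set ℝ) := by
      ext z; simp [mem_prod]
    rw [this, Measure.prod_prod, ha, zero_mul]
  have h2 : ∀ᵐ z : ℝ × ℝ ∂(a.prod b), z.2 ∈ Icc (0:ℝ) 1 := by
    rw [ae_iff]
    have : {z : ℝ × ℝ | ¬ z.2 ∈ Icc (0:ℝ) 1} = (univ : Set ℝ) ×ˢ (Icc (0:ℝ) 1)ᶜ := by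
      ext z; simp [mem_prod]
    rw [this, Measure.prod_prod, hb, mul_zero]
  exact h1.and h2

lemma kernel_integrable {γ : ℝ} (hγ : 0 < γ) {a b : Measure ℝ} [IsFiniteMeasure a]
    [IsFiniteMeasure b] (ha : a (Icc (0:ℝ) 1)ᶜ = 0) (hb : b (Icc (0:ℝ) 1)ᶜ = 0) :
    Integrable (fun z : ℝ × ℝ => |z.1 - z.2| ^ γ) (a.prod b) := by
  have hc : Continuous fun z : ℝ × ℝ => |z.1 - z.2| ^ γ :=
    ((continuous_fst.sub continuous_snd).abs).rpow_const (fun z => Or.inr hγ.le)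
  refine Integrable.mono' (integrable_const 1) hc.aestronglyMeasurable ?_
  filter_upwards [ae_mem_Icc_prod ha hb] with z hz
  have h1 : |z.1 - z.2| ≤ 1 := by
    rw [abs_le]; constructor <;> [linarith [hz.1.1, hz.2.2]; linarith [hz.1.2, hz.2.1]]
  rw [Real.norm_eq_abs, abs_of_nonneg (Real.rpow_nonneg (abs_nonneg _) _)]
  exact Real.rpow_le_one (abs_nonneg _) h1 hγ.le

lemma exp_integrable {s : ℝ} (hs : 0 ≤ s) {a b : Measure ℝ} [IsFiniteMeasure a]
    [IsFiniteMeasure b] :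
    Integrable (fun z : ℝ × ℝ => Real.exp (-((z.1 - z.2)^2 * s))) (a.prod b) := by
  have hc : Continuous fun z : ℝ × ℝ => Real.exp (-((z.1 - z.2)^2 * s)) := by fun_prop
  refine Integrable.mono' (integrable_const 1) hc.aestronglyMeasurable ?_
  filter_upwards with z
  rw [Real.norm_eq_abs, abs_of_nonneg (Real.exp_pos _).le]
  exact Real.exp_le_one_iff.2 (neg_nonpos.2 (mul_nonneg (sq_nonneg _) hs))

lemma swap_integrable {γ : ℝ} (hγ : 0 < γ) (hγ1 : γ < 1) {a b : Measure ℝ} [IsFiniteMeasure a]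
    [IsFiniteMeasure b] (ha : a (Icc (0:ℝ) 1)ᶜ = 0) (hb : b (Icc (0:ℝ) 1)ᶜ = 0) :
    Integrable (Function.uncurry fun (z : ℝ × ℝ) (s : ℝ) =>
      (1 - Real.exp (-((z.1 - z.2)^2 * s))) * s ^ (-1 - γ/2))
      ((a.prod b).prod (volume.restrict (Ioi 0))) := by
  have hβ : 0 < γ/2 := by linarith
  have hβ1 : γ/2 < 1 := by linarith
  have hmeas : AEStronglyMeasurable (Function.uncurry fun (z : ℝ × ℝ) (s : ℝ) =>
      (1 - Real.exp (-((z.1 - z.2)^2 * s))) * s ^ (-1 - γ/2))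
      ((a.prod b).prod (volume.restrict (Ioi 0))) := by
    have m1 : Measurable fun p : (ℝ × ℝ) × ℝ =>
        1 - Real.exp (-((p.1.1 - p.1.2)^2 * p.2)) := by fun_prop
    have m2 : Measurable fun p : (ℝ × ℝ) × ℝ => p.2 ^ (-1 - γ/2) := by fun_prop
    exact (m1.mul m2).aestronglyMeasurable
  rw [integrable_prod_iff hmeas]
  constructor
  · filter_upwards with z
    simpa only [Function.uncurry_apply_pair, IntegrableOn] using scaled_int hβ hβ1 (sq_nonneg (z.1 - z.2))
  · have key : ∀ z : ℝ × ℝ, (∫ s in Ioi (0:ℝ),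
        ‖(1 - Real.exp (-((z.1 - z.2)^2 * s))) * s ^ (-1 - γ/2)‖) = |z.1 - z.2| ^ γ * Kc (γ/2) := by
      intro z
      have heq : EqOn (fun s : ℝ => ‖(1 - Real.exp (-((z.1 - z.2)^2 * s))) * s ^ (-1 - γ/2)‖)
          (fun s : ℝ => (1 - Real.exp (-((z.1 - z.2)^2 * s))) * s ^ (-1 - γ/2)) (Ioi 0) := by
        intro s hs
        have h1 : 0 ≤ 1 - Real.exp (-((z.1 - z.2)^2 * s)) := by
          have := Real.exp_le_one_iff.2
            (neg_nonpos.2 (mul_nonneg (sq_nonneg (z.1 - z.2)) (le_of_lt hs)))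
          linarith
        exact norm_of_nonneg (mul_nonneg h1 (Real.rpow_nonneg (le_of_lt hs) _))
      rw [setIntegral_congr_fun measurableSet_Ioi heq, scaled_val hβ hβ1 (sq_nonneg _),
        sq_rpow_abs]
    refine Integrable.congr ((kernel_integrable hγ ha hb).mul_const (Kc (γ/2))) ?_
    filter_upwards with z
    exact (key z).symm

lemma term_repr {γ : ℝ} (hγ : 0 < γ) (hγ1 : γ < 1) {a b : Measure ℝ} [IsFiniteMeasure a]
    [IsFiniteMeasure b] (ha : a (Icc (0:ℝ) 1)ᶜ = 0) (hb : b (Icc (0:ℝ) 1)ᶜ = 0) :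
    ∫ x, ∫ y, |x - y| ^ γ ∂b ∂a = (Kc (γ/2))⁻¹ *
      ∫ s in Ioi (0:ℝ), ((mss a * mss b) - Gfun a b s) * s ^ (-1 - γ/2) := by
  have hβ : 0 < γ/2 := by linarith
  have hβ1 : γ/2 < 1 := by linarith
  have hK := Kc_pos hβ hβ1
  have h1 : ∫ x, ∫ y, |x - y| ^ γ ∂b ∂a = ∫ z : ℝ × ℝ, |z.1 - z.2| ^ γ ∂(a.prod b) :=
    (integral_prod _ (kernel_integrable hγ ha hb)).symm
  have hker : ∀ u : ℝ, |u| ^ γ =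
      (Kc (γ/2))⁻¹ * ∫ s in Ioi (0:ℝ), (1 - Real.exp (-(u^2 * s))) * s ^ (-1 - γ/2) := by
    intro u
    rw [scaled_val hβ hβ1 (sq_nonneg u), sq_rpow_abs]
    field_simp
  rw [h1]
  calc ∫ z : ℝ × ℝ, |z.1 - z.2| ^ γ ∂(a.prod b)
      = ∫ z : ℝ × ℝ, (Kc (γ/2))⁻¹ *
          (∫ s in Ioi (0:ℝ), (1 - Real.exp (-((z.1 - z.2)^2 * s))) * s ^ (-1 - γ/2)) ∂(a.prod b) :=
        integral_congr_ae (Filter.Eventually.of_forall fun z => hker (z.1 - z.2))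
    _ = (Kc (γ/2))⁻¹ * ∫ z : ℝ × ℝ,
          (∫ s in Ioi (0:ℝ), (1 - Real.exp (-((z.1 - z.2)^2 * s))) * s ^ (-1 - γ/2)) ∂(a.prod b) :=
        integral_const_mul _ _
    _ = (Kc (γ/2))⁻¹ * ∫ s in Ioi (0:ℝ), (∫ z : ℝ × ℝ,
          (1 - Real.exp (-((z.1 - z.2)^2 * s))) * s ^ (-1 - γ/2) ∂(a.prod b)) := by
        rw [integral_integral_swap (swap_integrable hγ hγ1 ha hb)]
    _ = (Kc (γ/2))⁻¹ * ∫ s in Ioi (0:ℝ), ((mss a * mss b) - Gfun a b s) * s ^ (-1 - γ/2) := by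
        congr 1
        refine setIntegral_congr_fun measurableSet_Ioi (fun s hs => ?_)
        rw [integral_mul_const]
        congr 1
        rw [integral_sub (integrable_const 1) (exp_integrable (le_of_lt hs))]
        congr 1
        rw [integral_const, measureReal_def, smul_eq_mul, mul_one, mss, mss, ← ENNReal.toReal_mul,
          ← Measure.prod_prod, univ_prod_univ]

lemma term_int {γ : ℝ} (hγ : 0 < γ) (hγ1 : γ < 1) {a b : Measure ℝ} [IsFiniteMeasure a]
    [IsFiniteMeasure b] (ha : a (Icc (0:ℝ) 1)ᶜ = 0) (hb : b (Icc (0:ℝ) 1)ᶜ = 0) :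
    IntegrableOn (fun s => ((mss a * mss b) - Gfun a b s) * s ^ (-1 - γ/2)) (Ioi (0:ℝ)) := by
  have h := (swap_integrable hγ hγ1 ha hb).integral_prod_right
  refine h.congr ?_
  filter_upwards [ae_restrict_mem measurableSet_Ioi] with s hs
  simp only [Function.uncurry_apply_pair]
  rw [integral_mul_const]
  congr 1
  rw [integral_sub (integrable_const 1) (exp_integrable (le_of_lt hs))]
  congr 1
  rw [integral_const, measureReal_def, smul_eq_mul, mul_one, mss, mss, ← ENNReal.toReal_mul,
    ← Measure.prod_prod, univ_prod_univ]

noncomputable def cmom (a : Measure ℝ) (s : ℝ) (n : ℕ) : ℝ :=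
  ∫ x, x ^ n * Real.exp (-(x^2 * s)) ∂a

lemma exp_term_bound {s : ℝ} (hs : 0 ≤ s) {x : ℝ} (hx : x ∈ Icc (0:ℝ) 1) (n : ℕ) :
    x ^ n * Real.exp (-(x^2 * s)) ∈ Icc (0:ℝ) 1 := by
  constructor
  · exact mul_nonneg (pow_nonneg hx.1 n) (Real.exp_pos _).le
  · have h1 : x ^ n ≤ 1 := pow_le_one₀ hx.1 hx.2
    have h2 : Real.exp (-(x^2 * s)) ≤ 1 :=
      Real.exp_le_one_iff.2 (neg_nonpos.2 (mul_nonneg (sq_nonneg x) hs))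
    calc x ^ n * Real.exp (-(x^2 * s)) ≤ 1 * 1 :=
          mul_le_mul h1 h2 (Real.exp_pos _).le one_pos.le
      _ = 1 := by norm_num

lemma cmom_mem {a : Measure ℝ} [IsFiniteMeasure a] (ha : a (Icc (0:ℝ) 1)ᶜ = 0)
    {s : ℝ} (hs : 0 ≤ s) (n : ℕ) : 0 ≤ cmom a s n ∧ cmom a s n ≤ mss a := by
  constructor
  · refine integral_nonneg_of_ae ?_
    filter_upwards [ae_mem_Icc ha] with x hx
    exact (exp_term_bound hs hx n).1
  · calc cmom a s n ≤ ∫ _, (1:ℝ) ∂a := by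
          refine integral_mono_ae ?_ (integrable_const 1) ?_
          · refine Integrable.mono' (integrable_const 1) ?_ ?_
            · exact (((continuous_pow n).mul (by fun_prop))).aestronglyMeasurable
            · filter_upwards [ae_mem_Icc ha] with x hx
              rw [Real.norm_eq_abs, abs_of_nonneg (exp_term_bound hs hx n).1]
              exact (exp_term_bound hs hx n).2
          · filter_upwards [ae_mem_Icc ha] with x hx
            exact (exp_term_bound hs hx n).2
      _ = mss a := by rw [integral_const, measureReal_def, smul_eq_mul, mul_one, mss]

lemma cmom_integrable {a : Measure ℝ} [IsFiniteMeasure a] (ha : a (Icc (0:ℝ) 1)ᶜ = 0)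
    {s : ℝ} (hs : 0 ≤ s) (n : ℕ) :
    Integrable (fun x => x ^ n * Real.exp (-(x^2 * s))) a := by
  refine Integrable.mono' (integrable_const 1) ?_ ?_
  · exact (((continuous_pow n).mul (by fun_prop))).aestronglyMeasurable
  · filter_upwards [ae_mem_Icc ha] with x hx
    rw [Real.norm_eq_abs, abs_of_nonneg (exp_term_bound hs hx n).1]
    exact (exp_term_bound hs hx n).2

lemma exp_expansion {s : ℝ} (x y : ℝ) :
    Real.exp (-((x - y)^2 * s)) = ∑' n : ℕ, ((2*s)^n / n.factorial) *
      ((x ^ n * Real.exp (-(x^2 * s))) * (y ^ n * Real.exp (-(y^2 * s)))) := by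
  have key : Real.exp (-((x - y)^2 * s)) =
      Real.exp (2*x*y*s) * (Real.exp (-(x^2 * s)) * Real.exp (-(y^2 * s))) := by
    rw [← Real.exp_add, ← Real.exp_add]; congr 1; ring
  rw [key, Real.exp_eq_exp_ℝ, NormedSpace.exp_eq_tsum_div]
  rw [← tsum_mul_right]
  congr 1; funext n
  have : (2*x*y*s)^n = (2*s)^n * (x^n * y^n) := by ring
  field_simp
  ring

lemma Gfun_series {s : ℝ} (hs : 0 ≤ s) {a b : Measure ℝ} [IsFiniteMeasure a]
    [IsFiniteMeasure b] (ha : a (Icc (0:ℝ) 1)ᶜ = 0) (hb : b (Icc (0:ℝ) 1)ᶜ = 0) :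
    Gfun a b s = ∑' n : ℕ, ((2*s)^n / n.factorial) * (cmom a s n * cmom b s n) := by
  classical
  set F : ℕ → ℝ × ℝ → ℝ := fun n z => ((2*s)^n / n.factorial) *
    ((z.1 ^ n * Real.exp (-(z.1^2 * s))) * (z.2 ^ n * Real.exp (-(z.2^2 * s)))) with hF
  have hFint : ∀ n, Integrable (F n) (a.prod b) := by
    intro n
    refine Integrable.mono' (integrable_const ((2*s)^n / n.factorial)) ?_ ?_
    · apply Measurable.aestronglyMeasurable
      fun_prop
    · filter_upwards [ae_mem_Icc_prod ha hb] with z hz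
      rw [Real.norm_eq_abs, hF]
      have h1 := exp_term_bound hs hz.1 n
      have h2 := exp_term_bound hs hz.2 n
      have hc : (0:ℝ) ≤ (2*s)^n / n.factorial :=
        div_nonneg (pow_nonneg (by linarith) n) (Nat.cast_nonneg _)
      simp only []
      rw [abs_of_nonneg (mul_nonneg hc (mul_nonneg h1.1 h2.1))]
      calc (2*s)^n / (n.factorial:ℝ) * (z.1 ^ n * rexp (-(z.1^2*s)) * (z.2 ^ n * rexp (-(z.2^2*s))))
          ≤ (2*s)^n / (n.factorial:ℝ) * (1 * 1) := by
            exact mul_le_mul_of_nonneg_left (mul_le_mul h1.2 h2.2 h2.1 one_pos.le) hc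
        _ = (2*s)^n / (n.factorial:ℝ) := by ring
  have hFsum : Summable fun n => ∫ z, ‖F n z‖ ∂(a.prod b) := by
    refine Summable.of_nonneg_of_le (fun n => integral_nonneg (fun z => norm_nonneg _)) ?_
      (((Real.summable_pow_div_factorial (2*s)).mul_right ((mss a) * (mss b))))
    intro n
    have hc : (0:ℝ) ≤ (2*s)^n / n.factorial :=
      div_nonneg (pow_nonneg (by linarith) n) (Nat.cast_nonneg _)
    calc ∫ z, ‖F n z‖ ∂(a.prod b) ≤ ∫ _, (2*s)^n / (n.factorial:ℝ) ∂(a.prod b) := by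
          refine integral_mono_ae (hFint n).norm (integrable_const _) ?_
          filter_upwards [ae_mem_Icc_prod ha hb] with z hz
          have h1 := exp_term_bound hs hz.1 n
          have h2 := exp_term_bound hs hz.2 n
          rw [Real.norm_eq_abs, abs_of_nonneg (mul_nonneg hc (mul_nonneg h1.1 h2.1))]
          calc (2*s)^n / (n.factorial:ℝ) * (z.1^n * rexp (-(z.1^2*s)) * (z.2^n * rexp (-(z.2^2*s))))
              ≤ (2*s)^n / (n.factorial:ℝ) * (1 * 1) :=
                mul_le_mul_of_nonneg_left (mul_le_mul h1.2 h2.2 h2.1 one_pos.le) hc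
            _ = (2*s)^n / (n.factorial:ℝ) := by ring
      _ = (2*s)^n / (n.factorial:ℝ) * (mss a * mss b) := by
          rw [integral_const, measureReal_def, smul_eq_mul, mss, mss, ← ENNReal.toReal_mul,
            ← Measure.prod_prod, univ_prod_univ, mul_comm]
  have hsum := (hasSum_integral_of_summable_integral_norm hFint hFsum).tsum_eq
  have heq : ∀ z : ℝ × ℝ, Real.exp (-((z.1 - z.2)^2 * s)) = ∑' n, F n z := fun z =>
    exp_expansion z.1 z.2
  rw [Gfun]
  calc ∫ z : ℝ × ℝ, Real.exp (-((z.1 - z.2)^2 * s)) ∂(a.prod b)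
      = ∫ z : ℝ × ℝ, (∑' n, F n z) ∂(a.prod b) := integral_congr_ae
        (Filter.Eventually.of_forall heq)
    _ = ∑' n, ∫ z, F n z ∂(a.prod b) := hsum.symm
    _ = ∑' n : ℕ, ((2*s)^n / n.factorial) * (cmom a s n * cmom b s n) := by
        congr 1; funext n
        rw [hF]
        simp only []
        rw [integral_const_mul, integral_prod_mul (f := fun x => x ^ n * Real.exp (-(x^2*s)))
          (g := fun y => y ^ n * Real.exp (-(y^2*s)))]
        rfl

lemma summable_prod_mom {s : ℝ} (hs : 0 ≤ s) {a b : Measure ℝ} [IsFiniteMeasure a]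
    [IsFiniteMeasure b] (ha : a (Icc (0:ℝ) 1)ᶜ = 0) (hb : b (Icc (0:ℝ) 1)ᶜ = 0) :
    Summable fun n : ℕ => ((2*s)^n / n.factorial) * (cmom a s n * cmom b s n) := by
  refine Summable.of_nonneg_of_le ?_ ?_
    ((Real.summable_pow_div_factorial (2*s)).mul_right ((mss a) * (mss b)))
  · intro n
    have hc : (0:ℝ) ≤ (2*s)^n / n.factorial :=
      div_nonneg (pow_nonneg (by linarith) n) (Nat.cast_nonneg _)
    exact mul_nonneg hc (mul_nonneg (cmom_mem ha hs n).1 (cmom_mem hb hs n).1)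
  · intro n
    have hc : (0:ℝ) ≤ (2*s)^n / n.factorial :=
      div_nonneg (pow_nonneg (by linarith) n) (Nat.cast_nonneg _)
    exact mul_le_mul_of_nonneg_left
      (mul_le_mul (cmom_mem ha hs n).2 (cmom_mem hb hs n).2 (cmom_mem hb hs n).1
        ((cmom_mem ha hs n).1.trans (cmom_mem ha hs n).2 |>.trans (le_refl _) |> fun _ => (le_trans (cmom_mem ha hs n).1 (cmom_mem ha hs n).2)) ) hc

lemma Gcomb_series {s : ℝ} (hs : 0 ≤ s) {p m : Measure ℝ} [IsFiniteMeasure p]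
    [IsFiniteMeasure m] (hp : p (Icc (0:ℝ) 1)ᶜ = 0) (hm : m (Icc (0:ℝ) 1)ᶜ = 0) :
    Gfun p p s - Gfun p m s - Gfun m p s + Gfun m m s
      = ∑' n : ℕ, ((2*s)^n / n.factorial) * (cmom p s n - cmom m s n)^2 := by
  rw [Gfun_series hs hp hp, Gfun_series hs hp hm, Gfun_series hs hm hp, Gfun_series hs hm hm]
  rw [← Summable.tsum_sub (summable_prod_mom hs hp hp) (summable_prod_mom hs hp hm),
    ← Summable.tsum_sub ((summable_prod_mom hs hp hp).sub (summable_prod_mom hs hp hm))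
      (summable_prod_mom hs hm hp),
    ← Summable.tsum_add (((summable_prod_mom hs hp hp).sub (summable_prod_mom hs hp hm)).sub
      (summable_prod_mom hs hm hp)) (summable_prod_mom hs hm hm)]
  congr 1; funext n; ring

lemma Gcomb_nonneg {s : ℝ} (hs : 0 ≤ s) {p m : Measure ℝ} [IsFiniteMeasure p]
    [IsFiniteMeasure m] (hp : p (Icc (0:ℝ) 1)ᶜ = 0) (hm : m (Icc (0:ℝ) 1)ᶜ = 0) :
    0 ≤ Gfun p p s - Gfun p m s - Gfun m p s + Gfun m m s := by
  rw [Gcomb_series hs hp hm]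
  refine tsum_nonneg (fun n => ?_)
  have hc : (0:ℝ) ≤ (2*s)^n / n.factorial :=
    div_nonneg (pow_nonneg (by linarith) n) (Nat.cast_nonneg _)
  exact mul_nonneg hc (sq_nonneg _)

lemma summable_diff_sq {s : ℝ} (hs : 0 ≤ s) {p m : Measure ℝ} [IsFiniteMeasure p]
    [IsFiniteMeasure m] (hp : p (Icc (0:ℝ) 1)ᶜ = 0) (hm : m (Icc (0:ℝ) 1)ᶜ = 0) :
    Summable fun n : ℕ => ((2*s)^n / n.factorial) * (cmom p s n - cmom m s n)^2 := by
  have h := (((summable_prod_mom hs hp hp).sub (summable_prod_mom hs hp hm)).sub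
      (summable_prod_mom hs hm hp)).add (summable_prod_mom hs hm hm)
  refine h.congr (fun n => ?_)
  ring

lemma moments_eq_of_Gcomb_zero {s : ℝ} (hs : 0 < s) {p m : Measure ℝ} [IsFiniteMeasure p]
    [IsFiniteMeasure m] (hp : p (Icc (0:ℝ) 1)ᶜ = 0) (hm : m (Icc (0:ℝ) 1)ᶜ = 0)
    (hQ : Gfun p p s - Gfun p m s - Gfun m p s + Gfun m m s = 0) :
    ∀ n : ℕ, cmom p s n = cmom m s n := by
  intro n
  rw [Gcomb_series hs.le hp hm] at hQ
  have hterm : ((2*s)^n / n.factorial) * (cmom p s n - cmom m s n)^2 ≤ 0 := by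
    rw [← hQ]
    refine Summable.le_tsum (summable_diff_sq hs.le hp hm) n (fun k _ => ?_)
    have hc : (0:ℝ) ≤ (2*s)^k / k.factorial :=
      div_nonneg (pow_nonneg (by linarith) k) (Nat.cast_nonneg _)
    exact mul_nonneg hc (sq_nonneg _)
  have hc : (0:ℝ) < (2*s)^n / n.factorial :=
    div_pos (pow_pos (by linarith) n) (by exact_mod_cast Nat.factorial_pos n)
  have h2 : (cmom p s n - cmom m s n)^2 ≤ 0 := by
    by_contra hcon
    push_neg at hcon
    nlinarith
  have := le_antisymm h2 (sq_nonneg _)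
  have := pow_eq_zero_iff (n := 2) (by norm_num) |>.1 this
  linarith

lemma cont_integrable {μ : Measure ℝ} [IsFiniteMeasure μ] (hsupp : μ (Icc (0:ℝ) 1)ᶜ = 0)
    {f : ℝ → ℝ} (hf : Continuous f) : Integrable f μ := by
  obtain ⟨C, hC⟩ := (isCompact_Icc (a := (0:ℝ)) (b := 1)).exists_bound_of_continuousOn
    hf.continuousOn
  refine Integrable.mono' (integrable_const C) hf.aestronglyMeasurable ?_
  filter_upwards [ae_mem_Icc hsupp] with x hx
  exact hC x hx

lemma poly_integral_eq {s : ℝ} (hs : 0 < s) {p m : Measure ℝ} [IsFiniteMeasure p]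
    [IsFiniteMeasure m] (hp : p (Icc (0:ℝ) 1)ᶜ = 0) (hm : m (Icc (0:ℝ) 1)ᶜ = 0)
    (hmom : ∀ n : ℕ, cmom p s n = cmom m s n) (q : Polynomial ℝ) :
    ∫ x, q.eval x * Real.exp (-(x^2 * s)) ∂p = ∫ x, q.eval x * Real.exp (-(x^2 * s)) ∂m := by
  have hrw : ∀ x : ℝ, q.eval x * Real.exp (-(x^2 * s)) =
      ∑ i ∈ Finset.range (q.natDegree + 1), q.coeff i * (x ^ i * Real.exp (-(x^2 * s))) := by
    intro x
    rw [Polynomial.eval_eq_sum_range, Finset.sum_mul]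
    congr 1; funext i; ring
  simp_rw [hrw]
  rw [integral_finset_sum _ (fun i _ => (cmom_integrable hp hs.le i).const_mul _),
    integral_finset_sum _ (fun i _ => (cmom_integrable hm hs.le i).const_mul _)]
  refine Finset.sum_congr rfl (fun i _ => ?_)
  rw [integral_const_mul, integral_const_mul]
  have := hmom i
  rw [cmom, cmom] at this
  rw [this]

lemma cont_integral_eq {s : ℝ} (hs : 0 < s) {p m : Measure ℝ} [IsFiniteMeasure p]
    [IsFiniteMeasure m] (hp : p (Icc (0:ℝ) 1)ᶜ = 0) (hm : m (Icc (0:ℝ) 1)ᶜ = 0)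
    (hmom : ∀ n : ℕ, cmom p s n = cmom m s n) (g : ℝ → ℝ) (hg : Continuous g) :
    ∫ x, g x ∂p = ∫ x, g x ∂m := by
  have key : ∀ ε : ℝ, 0 < ε → |∫ x, g x ∂p - ∫ x, g x ∂m| ≤ ε * (mss p + mss m) := by
    intro ε hε
    set h : ℝ → ℝ := fun x => g x * Real.exp (x^2 * s) with hh
    have hhc : Continuous h := by fun_prop
    obtain ⟨q, hq⟩ := exists_polynomial_near_of_continuousOn 0 1 h hhc.continuousOn ε hε
    set φ : ℝ → ℝ := fun x => q.eval x * Real.exp (-(x^2 * s)) with hφ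
    have hφc : Continuous φ := by fun_prop
    have hbound : ∀ x ∈ Icc (0:ℝ) 1, |g x - φ x| ≤ ε := by
      intro x hx
      have hgx : g x = h x * Real.exp (-(x^2 * s)) := by
        rw [hh]
        simp only []
        rw [mul_assoc, ← Real.exp_add]
        norm_num
      have : g x - φ x = (h x - q.eval x) * Real.exp (-(x^2 * s)) := by
        rw [hgx, hφ]; ring
      rw [this, abs_mul, abs_of_nonneg (Real.exp_pos _).le]
      have he1 : Real.exp (-(x^2 * s)) ≤ 1 :=
        Real.exp_le_one_iff.2 (neg_nonpos.2 (mul_nonneg (sq_nonneg x) hs.le))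
      have := (hq x hx).le
      rw [abs_sub_comm] at this
      calc |h x - q.eval x| * Real.exp (-(x^2 * s)) ≤ ε * 1 :=
            mul_le_mul this he1 (Real.exp_pos _).le hε.le
        _ = ε := mul_one ε
    have hφeq : ∫ x, φ x ∂p = ∫ x, φ x ∂m := poly_integral_eq hs hp hm hmom q
    have habs : ∀ (μ : Measure ℝ) [IsFiniteMeasure μ], μ (Icc (0:ℝ) 1)ᶜ = 0 →
        |∫ x, g x ∂μ - ∫ x, φ x ∂μ| ≤ ε * mss μ := by
      intro μ _ hμ
      rw [← integral_sub (cont_integrable hμ hg) (cont_integrable hμ hφc)]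
      calc |∫ x, g x - φ x ∂μ| ≤ ∫ x, |g x - φ x| ∂μ := by
            simpa only [Real.norm_eq_abs] using
              norm_integral_le_integral_norm (μ := μ) (fun x => g x - φ x)
        _ ≤ ∫ _, ε ∂μ := by
            refine integral_mono_ae ((cont_integrable hμ (hg.sub hφc)).abs) (integrable_const _) ?_
            filter_upwards [ae_mem_Icc hμ] with x hx
            exact hbound x hx
        _ = ε * mss μ := by rw [integral_const, measureReal_def, smul_eq_mul, mss, mul_comm]
    have h1 := habs p hp
    have h2 := habs m hm
    calc |∫ x, g x ∂p - ∫ x, g x ∂m|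
        = |(∫ x, g x ∂p - ∫ x, φ x ∂p) - (∫ x, g x ∂m - ∫ x, φ x ∂m)| := by
          rw [hφeq]; congr 1; ring
      _ ≤ |∫ x, g x ∂p - ∫ x, φ x ∂p| + |∫ x, g x ∂m - ∫ x, φ x ∂m| := abs_sub _ _
      _ ≤ ε * mss p + ε * mss m := add_le_add h1 h2
      _ = ε * (mss p + mss m) := by ring
  by_contra hne
  have habs : 0 < |∫ x, g x ∂p - ∫ x, g x ∂m| := abs_pos.2 (sub_ne_zero.2 hne)
  have hM : 0 ≤ mss p + mss m := add_nonneg ENNReal.toReal_nonneg ENNReal.toReal_nonneg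
  set d := |∫ x, g x ∂p - ∫ x, g x ∂m|
  have := key (d / (2 * (mss p + mss m + 1))) (by positivity)
  have hlt : d / (2 * (mss p + mss m + 1)) * (mss p + mss m) < d := by
    rw [div_mul_eq_mul_div, div_lt_iff₀ (by positivity)]
    nlinarith
  linarith

lemma measures_eq {s : ℝ} (hs : 0 < s) {p m : Measure ℝ} [IsFiniteMeasure p]
    [IsFiniteMeasure m] (hp : p (Icc (0:ℝ) 1)ᶜ = 0) (hm : m (Icc (0:ℝ) 1)ᶜ = 0)
    (hmom : ∀ n : ℕ, cmom p s n = cmom m s n) : p = m := by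
  refine ext_of_forall_lintegral_eq_of_IsFiniteMeasure (fun f => ?_)
  have hg : Continuous fun x => ((f x : ℝ≥0) : ℝ) := NNReal.continuous_coe.comp f.continuous
  rw [lintegral_coe_eq_integral _ (cont_integrable hp hg),
    lintegral_coe_eq_integral _ (cont_integrable hm hg),
    cont_integral_eq hs hp hm hmom _ hg]


/-- Let `μ = μp - μm` be a finite signed Borel measure on `[0,1]`
(written through its decomposition into two finite measures supported on `[0,1]`)
with `μ([0,1]) = 0`.  Then
`I(μ) = ∫∫ |x-y|^γ dμ(x) dμ(y) ≤ 0`, with equality iff `μ(E) = 0` for every Borel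
`E ⊆ [0,1]`. -/
theorem stmt15 (γ : ℝ) (hγ : 0 < γ) (hγ1 : γ < 1)
    (μp μm : Measure ℝ) [IsFiniteMeasure μp] [IsFiniteMeasure μm]
    (hsuppp : μp (Set.Icc (0 : ℝ) 1)ᶜ = 0) (hsuppm : μm (Set.Icc (0 : ℝ) 1)ᶜ = 0)
    (hzero : μp (Set.Icc (0 : ℝ) 1) = μm (Set.Icc (0 : ℝ) 1)) :
    ((∫ x, ∫ y, |x - y| ^ γ ∂μp ∂μp) - (∫ x, ∫ y, |x - y| ^ γ ∂μm ∂μp) -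
          (∫ x, ∫ y, |x - y| ^ γ ∂μp ∂μm) + ∫ x, ∫ y, |x - y| ^ γ ∂μm ∂μm) ≤ 0 ∧
      (((∫ x, ∫ y, |x - y| ^ γ ∂μp ∂μp) - (∫ x, ∫ y, |x - y| ^ γ ∂μm ∂μp) -
            (∫ x, ∫ y, |x - y| ^ γ ∂μp ∂μm) + ∫ x, ∫ y, |x - y| ^ γ ∂μm ∂μm) = 0 ↔
        ∀ E : Set ℝ, MeasurableSet E → μp E = μm E) := by
  have hβ : 0 < γ/2 := by linarith
  have hβ1 : γ/2 < 1 := by linarith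
  have hK := Kc_pos hβ hβ1
  have hmass : mss μp = mss μm := by
    have h1 : μp univ = μp (Icc (0:ℝ) 1) := by
      rw [← measure_add_measure_compl (measurableSet_Icc (a := (0:ℝ)) (b := 1)), hsuppp, add_zero]
    have h2 : μm univ = μm (Icc (0:ℝ) 1) := by
      rw [← measure_add_measure_compl (measurableSet_Icc (a := (0:ℝ)) (b := 1)), hsuppm, add_zero]
    rw [mss, mss, h1, h2, hzero]
  set QQ : ℝ → ℝ := fun s =>
    (Gfun μp μp s - Gfun μp μm s - Gfun μm μp s + Gfun μm μm s) * s ^ (-1 - γ/2) with hQQ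
  have hptw : ∀ s : ℝ,
      ((mss μp * mss μp) - Gfun μp μp s) * s ^ (-1 - γ/2)
      - ((mss μp * mss μm) - Gfun μp μm s) * s ^ (-1 - γ/2)
      - ((mss μm * mss μp) - Gfun μm μp s) * s ^ (-1 - γ/2)
      + ((mss μm * mss μm) - Gfun μm μm s) * s ^ (-1 - γ/2) = -QQ s := by
    intro s
    rw [hQQ]
    simp only [hmass]
    ring
  have hEQ : ((∫ x, ∫ y, |x - y| ^ γ ∂μp ∂μp) - (∫ x, ∫ y, |x - y| ^ γ ∂μm ∂μp) -
          (∫ x, ∫ y, |x - y| ^ γ ∂μp ∂μm) + ∫ x, ∫ y, |x - y| ^ γ ∂μm ∂μm)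
      = -((Kc (γ/2))⁻¹ * ∫ s in Ioi (0:ℝ), QQ s) := by
    rw [term_repr hγ hγ1 hsuppp hsuppp, term_repr hγ hγ1 hsuppp hsuppm,
      term_repr hγ hγ1 hsuppm hsuppp, term_repr hγ hγ1 hsuppm hsuppm]
    have i1 : IntegrableOn (fun s : ℝ => (mss μp * mss μp - Gfun μp μp s) * s ^ (-1 - γ/2))
      (Ioi (0:ℝ)) := term_int hγ hγ1 hsuppp hsuppp
    have i2 : IntegrableOn (fun s : ℝ => (mss μp * mss μm - Gfun μp μm s) * s ^ (-1 - γ/2))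
      (Ioi (0:ℝ)) := term_int hγ hγ1 hsuppp hsuppm
    have i3 : IntegrableOn (fun s : ℝ => (mss μm * mss μp - Gfun μm μp s) * s ^ (-1 - γ/2))
      (Ioi (0:ℝ)) := term_int hγ hγ1 hsuppm hsuppp
    have i4 : IntegrableOn (fun s : ℝ => (mss μm * mss μm - Gfun μm μm s) * s ^ (-1 - γ/2))
      (Ioi (0:ℝ)) := term_int hγ hγ1 hsuppm hsuppm
    have i12 : IntegrableOn (fun s : ℝ => (mss μp * mss μp - Gfun μp μp s) * s ^ (-1 - γ/2)
        - (mss μp * mss μm - Gfun μp μm s) * s ^ (-1 - γ/2)) (Ioi (0:ℝ)) := i1.sub i2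
    have i123 : IntegrableOn (fun s : ℝ => (mss μp * mss μp - Gfun μp μp s) * s ^ (-1 - γ/2)
        - (mss μp * mss μm - Gfun μp μm s) * s ^ (-1 - γ/2)
        - (mss μm * mss μp - Gfun μm μp s) * s ^ (-1 - γ/2)) (Ioi (0:ℝ)) := i12.sub i3
    rw [← mul_sub, ← mul_sub, ← mul_add]
    rw [← integral_sub i1 i2, ← integral_sub i12 i3, ← integral_add i123 i4]
    rw [integral_congr_ae (Filter.Eventually.of_forall fun s => hptw s)]
    rw [integral_neg]
    ring
  have hQQint : IntegrableOn QQ (Ioi (0:ℝ)) := by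
    have h := ((((term_int hγ hγ1 hsuppp hsuppp).sub (term_int hγ hγ1 hsuppp hsuppm)).sub
      (term_int hγ hγ1 hsuppm hsuppp)).add (term_int hγ hγ1 hsuppm hsuppm)).neg
    refine h.congr (Filter.Eventually.of_forall fun s => ?_)
    simp only [Pi.neg_apply, Pi.add_apply, Pi.sub_apply]
    linarith [hptw s]
  have hQQpos : 0 ≤ᵐ[volume.restrict (Ioi (0:ℝ))] QQ := by
    filter_upwards [ae_restrict_mem measurableSet_Ioi] with s hs
    exact mul_nonneg (Gcomb_nonneg (le_of_lt hs) hsuppp hsuppm)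
      (Real.rpow_nonneg (le_of_lt hs) _)
  have hIQQ : 0 ≤ ∫ s in Ioi (0:ℝ), QQ s := integral_nonneg_of_ae hQQpos
  constructor
  · rw [hEQ]
    have := mul_nonneg (inv_nonneg.2 hK.le) hIQQ
    linarith
  · constructor
    · intro h0
      rw [hEQ] at h0
      have hI0 : ∫ s in Ioi (0:ℝ), QQ s = 0 := by
        have hKne : (Kc (γ/2))⁻¹ ≠ 0 := inv_ne_zero hK.ne'
        have := neg_eq_zero.1 h0
        exact (mul_eq_zero.1 this).resolve_left hKne
      have hae := (integral_eq_zero_iff_of_nonneg_ae hQQpos hQQint).1 hI0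
      have hNeBot : (ae (volume.restrict (Ioi (0:ℝ)))).NeBot := by
        refine ae_neBot.2 ?_
        intro hcon
        rw [Measure.restrict_eq_zero, Real.volume_Ioi] at hcon
        exact ENNReal.top_ne_zero hcon
      obtain ⟨s, hsQ, hs⟩ := (hae.and (ae_restrict_mem measurableSet_Ioi)).exists
      have hpow : 0 < s ^ (-1 - γ/2) := Real.rpow_pos_of_pos hs _
      have hGz : Gfun μp μp s - Gfun μp μm s - Gfun μm μp s + Gfun μm μm s = 0 := by
        have h0' : QQ s = 0 := hsQ
        simp only [hQQ] at h0'
        exact (mul_eq_zero.1 h0').resolve_right hpow.ne'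
      have hmom := moments_eq_of_Gcomb_zero hs hsuppp hsuppm hGz
      have heq := measures_eq hs hsuppp hsuppm hmom
      intro E _
      rw [heq]
    · intro h
      have hpm : μp = μm := Measure.ext (fun E hE => h E hE)
      rw [hpm]
      ring
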